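/- Let S be a finite alphabet, Q : S → ℝ a probability distribution with Q(x) > 0 for all x, and R ∈ ℝ. For λ > −1 define Z(λ) = ∑_{x∈S} Q(x)^{1/(1+λ)}, P^λ(x) = Q(x)^{1/(1+λ)}/Z(λ), and γ(λ) = λR − (1+λ) ln Z(λ). Then γ is differentiable on (−1, ∞) and γ'(λ) = R − H(P^λ) for every λ > −1; in particular γ'(λ) = 0 if and only if H(P^λ) = R. -/

import Mathlib

/-- For `γ(λ) = λR - (1+λ) ln Z(λ)` with `Z(λ) = ∑ Q(x)^{1/(1+λ)}`, the function
`γ` is differentiable on `(-1, ∞)` with `γ'(λ) = R - H(P^λ)`, where `P^λ` is the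
tilted distribution; in particular `γ'(λ) = 0` iff `H(P^λ) = R`. -/
theorem deriv_error_exponent (S : Type*) [Fintype S]
    (Q : S → ℝ) (hQpos : ∀ x, 0 < Q x) (hQsum : ∑ x, Q x = 1) (R : ℝ)
    (γ : ℝ → ℝ)
    (hγ : ∀ l, γ l = l * R - (1 + l) * Real.log (∑ x, Q x ^ (1 / (1 + l))))
    (H : ℝ → ℝ)
    (hH : ∀ l, H l =
      -∑ x, (Q x ^ (1 / (1 + l)) / ∑ y, Q y ^ (1 / (1 + l))) *
        Real.log (Q x ^ (1 / (1 + l)) / ∑ y, Q y ^ (1 / (1 + l)))) :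
    ∀ l : ℝ, -1 < l →
      HasDerivAt γ (R - H l) l ∧ (deriv γ l = 0 ↔ H l = R) := by
  intro l hl
  have h1l : (0:ℝ) < 1 + l := by linarith
  have h1l' : (1 + l) ≠ 0 := ne_of_gt h1l
  set t : ℝ := 1 / (1 + l) with ht
  set Z : ℝ → ℝ := fun l => ∑ x, Q x ^ (1 / (1 + l)) with hZdef
  have hZpos : ∀ m : ℝ, -1 < m → 0 < Z m := by
    intro m hm
    have hne : (Finset.univ : Finset S).Nonempty := by
      rcases (Finset.univ : Finset S).eq_empty_or_nonempty with h | h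
      · simp [h] at hQsum
      · exact h
    exact Finset.sum_pos (fun x _ => Real.rpow_pos_of_pos (hQpos x) _) hne
  have hZl : 0 < Z l := hZpos l hl
  have hZne : Z l ≠ 0 := ne_of_gt hZl
  -- derivative of g(m) = 1/(1+m)
  have hg : HasDerivAt (fun m : ℝ => 1 / (1 + m)) (-1 / (1 + l) ^ 2) l := by
    have h : HasDerivAt (fun m : ℝ => 1 + m) 1 l :=
      (hasDerivAt_id l).const_add 1
    have := h.fun_inv h1l'
    simpa [one_div] using this
  -- derivative of Z
  set A : ℝ := ∑ x, Q x ^ t * Real.log (Q x) with hA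
  have hZ' : HasDerivAt Z (A * (-1 / (1 + l) ^ 2)) l := by
    rw [hA, Finset.sum_mul]
    apply HasDerivAt.fun_sum
    intro x _
    have := ((Real.hasStrictDerivAt_const_rpow (hQpos x) (1 / (1 + l))).hasDerivAt.comp l hg)
    simpa [ht, Function.comp_def, mul_comm, mul_assoc, mul_left_comm] using this
  have hlog : HasDerivAt (fun m => Real.log (Z m)) (A * (-1 / (1 + l) ^ 2) / Z l) l :=
    hZ'.log hZne
  have hγ' : HasDerivAt γ
      (R - (Real.log (Z l) + (1 + l) * (A * (-1 / (1 + l) ^ 2) / Z l))) l := by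
    have hmul : HasDerivAt (fun m => (1 + m) * Real.log (Z m))
        (1 * Real.log (Z l) + (1 + l) * (A * (-1 / (1 + l) ^ 2) / Z l)) l :=
      ((hasDerivAt_id l).const_add 1).mul hlog
    have hfull : HasDerivAt (fun m => m * R - (1 + m) * Real.log (Z m))
        (R - (1 * Real.log (Z l) + (1 + l) * (A * (-1 / (1 + l) ^ 2) / Z l))) l := by
      simpa using ((hasDerivAt_id l).mul_const R).fun_sub hmul
    have : γ = fun m => m * R - (1 + m) * Real.log (Z m) := funext hγ
    rw [this]
    simpa using hfull
  -- identify H l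
  have hkey : H l = Real.log (Z l) + (1 + l) * (A * (-1 / (1 + l) ^ 2) / Z l) := by
    rw [hH l]
    have hterm : ∀ x : S,
        (Q x ^ t / Z l) * Real.log (Q x ^ t / Z l)
          = (Q x ^ t * (t * Real.log (Q x)) - Q x ^ t * Real.log (Z l)) / Z l := by
      intro x
      rw [Real.log_div (ne_of_gt (Real.rpow_pos_of_pos (hQpos x) t)) hZne,
        Real.log_rpow (hQpos x)]
      ring
    calc -∑ x, (Q x ^ t / Z l) * Real.log (Q x ^ t / Z l)
        = -∑ x, (Q x ^ t * (t * Real.log (Q x)) - Q x ^ t * Real.log (Z l)) / Z l := by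
          rw [Finset.sum_congr rfl fun x _ => hterm x]
      _ = -((∑ x, Q x ^ t * (t * Real.log (Q x))) - (∑ x, Q x ^ t) * Real.log (Z l)) / Z l := by
          rw [← Finset.sum_div, Finset.sum_sub_distrib, ← Finset.sum_mul, neg_div]
      _ = -(t * A - Z l * Real.log (Z l)) / Z l := by
          have hAs : ∑ x, Q x ^ t * (t * Real.log (Q x)) = t * A := by
            rw [hA, Finset.mul_sum]
            exact Finset.sum_congr rfl fun x _ => by ring
          have hZsum : ∑ x, Q x ^ t = Z l := rfl
          rw [hAs, hZsum]
      _ = Real.log (Z l) + (1 + l) * (A * (-1 / (1 + l) ^ 2) / Z l) := by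
          rw [ht]
          field_simp
          ring
  have hγ'' : HasDerivAt γ (R - H l) l := by rw [hkey]; exact hγ'
  refine ⟨hγ'', ?_⟩
  rw [hγ''.deriv]
  constructor
  · intro h; linarith [sub_eq_zero.mp h]
  · intro h; rw [h]; ring
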